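/- For g ≥ 2, the group F_g × ℤ contains, up to isomorphism, infinitely many fixed subgroups of endomorphisms. In particular, for every m ≥ 1, the endomorphism φ_m of F_g × ℤ defined by φ_m(u, v) = (u, γ(u) + (m+1)v), where γ : F_g → ℤ sends a₁ ↦ 1 and a_i ↦ 0 for i ≥ 2, satisfies Fix φ_m ≅ F_{m(g-1)+1}. -/

import Mathlib

def fixedSubgroup {G : Type*} [Group G] (φ : G →* G) : Subgroup G where
  carrier := {x | φ x = x}
  one_mem' := by simp
  mul_mem' := by
    intro a b ha hb
    simp only [Set.mem_setOf_eq, map_mul] at *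
    rw [ha, hb]
  inv_mem' := by
    intro a ha
    simp only [Set.mem_setOf_eq, map_inv] at *
    rw [ha]

open scoped commutatorElement

/-- The surface group π₁(Σ_g) = ⟨a₁,b₁,…,a_g,b_g ∣ [a₁,b₁]⋯[a_g,b_g] = 1⟩,
with generators `(i, true) = aᵢ` and `(i, false) = bᵢ`. -/
abbrev SurfaceGroup (g : ℕ) : Type :=
  PresentedGroup
    ({(List.ofFn fun i : Fin g =>
        ⁅FreeGroup.of (i, true), FreeGroup.of (i, false)⁆).prod} :
      Set (FreeGroup (Fin g × Bool)))

/-- The rank of a group: the minimal cardinality of a generating set. -/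
noncomputable def grpRank (G : Type*) [Group G] : Cardinal :=
  ⨅ S : {S : Set G // Subgroup.closure S = ⊤}, Cardinal.mk S.1


open Multiplicative SemidirectProduct

namespace S15
variable (Gn Mn : ℕ)

abbrev XX := Unit ⊕ (Fin (Mn+1) × Fin (Gn+1))

def b0 : FreeGroup (XX Gn Mn) := .of (Sum.inl ())
def a0 : FreeGroup (Fin (Gn+2)) := .of 0

def Phi : FreeGroup (XX Gn Mn) →* FreeGroup (Fin (Gn+2)) :=
  FreeGroup.lift fun x => match x with
    | Sum.inl _ => (a0 Gn) ^ (Mn+1)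
    | Sum.inr (k, i) => (a0 Gn)^(k:ℕ) * .of i.succ * ((a0 Gn)^(k:ℕ))⁻¹

lemma of_inl (u : Unit) :
    (FreeGroup.of (Sum.inl u) : FreeGroup (XX Gn Mn)) = b0 Gn Mn := rfl

@[simp] lemma Phi_b0 : Phi Gn Mn (b0 Gn Mn) = (a0 Gn) ^ (Mn+1) := by
  simp [Phi, b0]

@[simp] lemma Phi_bk (k : Fin (Mn+1)) (i : Fin (Gn+1)) :
    Phi Gn Mn (.of (Sum.inr (k, i))) =
      (a0 Gn)^(k:ℕ) * .of i.succ * ((a0 Gn)^(k:ℕ))⁻¹ := by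
  simp [Phi]

def alf : FreeGroup (XX Gn Mn) →* FreeGroup (XX Gn Mn) :=
  FreeGroup.lift fun x => match x with
    | Sum.inl _ => b0 Gn Mn
    | Sum.inr (k, i) =>
      if h : (k:ℕ)+1 < Mn+1 then .of (Sum.inr (⟨(k:ℕ)+1, h⟩, i))
      else b0 Gn Mn * .of (Sum.inr (0, i)) * (b0 Gn Mn)⁻¹

def bef : FreeGroup (XX Gn Mn) →* FreeGroup (XX Gn Mn) :=
  FreeGroup.lift fun x => match x with
    | Sum.inl _ => b0 Gn Mn
    | Sum.inr (k, i) =>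
      if h : 0 < (k:ℕ) then .of (Sum.inr (⟨(k:ℕ)-1, by have := k.isLt; omega⟩, i))
      else (b0 Gn Mn)⁻¹ * .of (Sum.inr (⟨Mn, Nat.lt_succ_self _⟩, i)) * b0 Gn Mn

@[simp] lemma alf_b0 : alf Gn Mn (b0 Gn Mn) = b0 Gn Mn := by simp [alf, b0]
@[simp] lemma bef_b0 : bef Gn Mn (b0 Gn Mn) = b0 Gn Mn := by simp [bef, b0]

lemma alf_bk_lt (k : Fin (Mn+1)) (i : Fin (Gn+1)) (h : (k:ℕ)+1 < Mn+1) :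
    alf Gn Mn (.of (Sum.inr (k, i))) = .of (Sum.inr (⟨(k:ℕ)+1, h⟩, i)) := by
  simp only [alf, FreeGroup.lift_apply_of]
  exact dif_pos h

lemma alf_bk_top (i : Fin (Gn+1)) :
    alf Gn Mn (.of (Sum.inr (⟨Mn, Nat.lt_succ_self _⟩, i))) =
      b0 Gn Mn * .of (Sum.inr (0, i)) * (b0 Gn Mn)⁻¹ := by
  simp only [alf, FreeGroup.lift_apply_of]
  exact dif_neg (by simp)

lemma bef_bk_pos (k : Fin (Mn+1)) (i : Fin (Gn+1)) (h : 0 < (k:ℕ)) :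
    bef Gn Mn (.of (Sum.inr (k, i))) =
      .of (Sum.inr (⟨(k:ℕ)-1, by have := k.isLt; omega⟩, i)) := by
  simp only [bef, FreeGroup.lift_apply_of]
  exact dif_pos h

lemma bef_bk_zero (i : Fin (Gn+1)) :
    bef Gn Mn (.of (Sum.inr (0, i))) =
      (b0 Gn Mn)⁻¹ * .of (Sum.inr (⟨Mn, Nat.lt_succ_self _⟩, i)) * b0 Gn Mn := by
  simp only [bef, FreeGroup.lift_apply_of]
  exact dif_neg (by simp)

lemma of_inr_congr (j k : Fin (Mn+1)) (i : Fin (Gn+1)) (h : (j:ℕ) = (k:ℕ)) :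
    (FreeGroup.of (Sum.inr (j, i)) : FreeGroup (XX Gn Mn)) = .of (Sum.inr (k, i)) := by
  have : j = k := Fin.ext h
  rw [this]

lemma bef_alf : (bef Gn Mn).comp (alf Gn Mn) = MonoidHom.id _ := by
  apply FreeGroup.ext_hom
  rintro (u | ⟨k, i⟩)
  · rw [of_inl]; simp
  · simp only [MonoidHom.comp_apply, MonoidHom.id_apply]
    by_cases h : (k:ℕ)+1 < Mn+1
    · rw [alf_bk_lt Gn Mn k i h, bef_bk_pos Gn Mn _ i (by simp)]
      exact of_inr_congr _ _ _ _ _ (by simp)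
    · have hk : k = ⟨Mn, Nat.lt_succ_self _⟩ := by
        ext; have := k.isLt; simp; omega
      subst hk
      rw [alf_bk_top, map_mul, map_mul, map_inv, bef_b0, bef_bk_zero]
      group

lemma alf_bef : (alf Gn Mn).comp (bef Gn Mn) = MonoidHom.id _ := by
  apply FreeGroup.ext_hom
  rintro (u | ⟨k, i⟩)
  · rw [of_inl]; simp
  · simp only [MonoidHom.comp_apply, MonoidHom.id_apply]
    by_cases h : 0 < (k:ℕ)
    · rw [bef_bk_pos Gn Mn k i h,
        alf_bk_lt Gn Mn _ i (by have := k.isLt; simp; omega)]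
      exact of_inr_congr _ _ _ _ _ (by have := k.isLt; simp; omega)
    · have hk : k = 0 := by ext; simpa using h
      subst hk
      rw [bef_bk_zero, map_mul, map_mul, map_inv, alf_b0, alf_bk_top]
      group

def alpha : MulAut (FreeGroup (XX Gn Mn)) :=
  MonoidHom.toMulEquiv (alf Gn Mn) (bef Gn Mn) (bef_alf Gn Mn) (alf_bef Gn Mn)

@[simp] lemma alpha_apply (x : FreeGroup (XX Gn Mn)) : alpha Gn Mn x = alf Gn Mn x := rfl

lemma Phi_alf (y : FreeGroup (XX Gn Mn)) :
    Phi Gn Mn (alf Gn Mn y) = a0 Gn * Phi Gn Mn y * (a0 Gn)⁻¹ := by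
  have : (Phi Gn Mn).comp (alf Gn Mn)
      = (MulAut.conj (a0 Gn)).toMonoidHom.comp (Phi Gn Mn) := by
    apply FreeGroup.ext_hom
    rintro (u | ⟨k, i⟩)
    · rw [of_inl]
      simp only [MonoidHom.comp_apply, alf_b0, Phi_b0, MulEquiv.coe_toMonoidHom,
        MulAut.conj_apply]
      group
    · simp only [MonoidHom.comp_apply, MulEquiv.coe_toMonoidHom, MulAut.conj_apply]
      by_cases h : (k:ℕ)+1 < Mn+1
      · rw [alf_bk_lt Gn Mn k i h]
        simp only [Phi_bk, Fin.val_mk]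
        group
      · have hk : k = ⟨Mn, Nat.lt_succ_self _⟩ := by
          ext; have := k.isLt; simp; omega
        subst hk
        rw [alf_bk_top, map_mul, map_mul, map_inv, Phi_b0, Phi_bk, Phi_bk]
        simp only [Fin.val_mk, Fin.val_zero]
        group
  exact DFunLike.congr_fun this y

lemma Phi_alpha_zpow (n : ℤ) (y : FreeGroup (XX Gn Mn)) :
    Phi Gn Mn ((alpha Gn Mn ^ n) y) = (a0 Gn) ^ n * Phi Gn Mn y * (a0 Gn) ^ (-n) := by
  induction n using Int.induction_on with
  | zero => simp
  | succ n ih =>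
      have h1 : (alpha Gn Mn ^ ((n : ℤ) + 1)) y = alf Gn Mn ((alpha Gn Mn ^ (n : ℤ)) y) := by
        rw [add_comm, zpow_one_add]
        rfl
      rw [h1, Phi_alf, ih]
      group
  | pred n ih =>
      have h1 : alf Gn Mn ((alpha Gn Mn ^ (-(n:ℤ)-1)) y) = (alpha Gn Mn ^ (-(n:ℤ))) y := by
        have h2 : (alpha Gn Mn * alpha Gn Mn ^ (-(n:ℤ)-1)) y
            = (alpha Gn Mn ^ (-(n:ℤ))) y := by
          rw [← zpow_one_add]
          norm_num
        rw [← h2]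
        rfl
      have h3 := Phi_alf Gn Mn ((alpha Gn Mn ^ (-(n:ℤ)-1)) y)
      rw [h1, ih] at h3
      calc Phi Gn Mn ((alpha Gn Mn ^ (-(n:ℤ)-1)) y)
          = (a0 Gn)⁻¹ * (a0 Gn * Phi Gn Mn ((alpha Gn Mn ^ (-(n:ℤ)-1)) y) * (a0 Gn)⁻¹)
            * a0 Gn := by group
        _ = (a0 Gn)⁻¹ * (a0 Gn ^ (-(n:ℤ)) * Phi Gn Mn y * a0 Gn ^ (-(-(n:ℤ)))) * a0 Gn := by
            rw [← h3]
        _ = a0 Gn ^ (-(n:ℤ)-1) * Phi Gn Mn y * a0 Gn ^ (-(-(n:ℤ)-1)) := by group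

abbrev TT := SemidirectProduct (FreeGroup (XX Gn Mn)) (Multiplicative ℤ)
  (zpowersHom _ (alpha Gn Mn))

def Theta : FreeGroup (Fin (Gn+2)) →* TT Gn Mn :=
  FreeGroup.lift (Fin.cases (inr (ofAdd 1))
    (fun i => inl (.of (Sum.inr (0, i)))))

@[simp] lemma Theta_a0 : Theta Gn Mn (a0 Gn) = inr (ofAdd 1) := by
  simp [Theta, a0]

@[simp] lemma Theta_succ (i : Fin (Gn+1)) :
    Theta Gn Mn (.of i.succ) = inl (.of (Sum.inr (0, i))) := by
  simp [Theta]

lemma lam_compat :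
    ∀ z : Multiplicative ℤ, (Phi Gn Mn).comp ((zpowersHom _ (alpha Gn Mn)) z).toMonoidHom
      = (MulAut.conj ((zpowersHom _ (a0 Gn)) z)).toMonoidHom.comp (Phi Gn Mn) := by
  intro z
  ext y
  simp only [MonoidHom.comp_apply, MulEquiv.coe_toMonoidHom, MulAut.conj_apply,
    zpowersHom_apply]
  rw [Phi_alpha_zpow]
  group

def Lam : TT Gn Mn →* FreeGroup (Fin (Gn+2)) :=
  SemidirectProduct.lift (Phi Gn Mn) (zpowersHom _ (a0 Gn)) (lam_compat Gn Mn)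

lemma Lam_Theta : (Lam Gn Mn).comp (Theta Gn Mn) = MonoidHom.id _ := by
  apply FreeGroup.ext_hom
  intro j
  induction j using Fin.cases with
  | zero =>
      show Lam Gn Mn (Theta Gn Mn (a0 Gn)) = a0 Gn
      rw [Theta_a0]
      simp [Lam]
  | succ i =>
      simp only [MonoidHom.comp_apply, MonoidHom.id_apply, Theta_succ]
      simp [Lam]

lemma factB (u : FreeGroup (Fin (Gn+2))) :
    Phi Gn Mn ((Theta Gn Mn u).left) * (a0 Gn) ^ (toAdd ((Theta Gn Mn u).right)) = u := by
  have h := DFunLike.congr_fun (Lam_Theta Gn Mn) u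
  simp only [MonoidHom.comp_apply, MonoidHom.id_apply] at h
  rw [← inl_left_mul_inr_right (Theta Gn Mn u), map_mul] at h
  simpa [Lam] using h

def gam : FreeGroup (Fin (Gn+2)) →* Multiplicative ℤ :=
  FreeGroup.lift (Fin.cases (ofAdd 1) (fun _ => 1))

@[simp] lemma gam_a0 : gam Gn (a0 Gn) = ofAdd 1 := by simp [gam, a0]
@[simp] lemma gam_succ (i : Fin (Gn+1)) : gam Gn (.of i.succ) = 1 := by simp [gam]

lemma right_Theta (u : FreeGroup (Fin (Gn+2))) :
    (Theta Gn Mn u).right = gam Gn u := by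
  have : (rightHom).comp (Theta Gn Mn) = gam Gn := by
    apply FreeGroup.ext_hom
    intro j
    induction j using Fin.cases with
    | zero =>
        show rightHom (Theta Gn Mn (a0 Gn)) = gam Gn (a0 Gn)
        rw [Theta_a0]
        simp
    | succ i =>
        simp only [MonoidHom.comp_apply, Theta_succ]
        simp
  have := DFunLike.congr_fun this u
  simpa [rightHom] using this

lemma alpha_pow_b0 (n : ℕ) : (alpha Gn Mn ^ n) (b0 Gn Mn) = b0 Gn Mn := by
  induction n with
  | zero => simp
  | succ n ih =>
      rw [pow_succ, MulAut.mul_apply]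
      simp [ih]

lemma alpha_pow_bk (j : ℕ) : ∀ (k : ℕ) (hk : k < Mn+1) (h : j + k ≤ Mn)
    (i : Fin (Gn+1)),
    (alpha Gn Mn ^ j) (.of (Sum.inr (⟨k, hk⟩, i)))
      = .of (Sum.inr (⟨k + j, by omega⟩, i)) := by
  induction j with
  | zero =>
      intro k hk h i
      simp only [pow_zero, MulAut.one_apply]
      exact of_inr_congr Gn Mn _ _ _ (by simp)
  | succ j ih =>
      intro k hk h i
      rw [pow_succ, MulAut.mul_apply, alpha_apply,
        alf_bk_lt Gn Mn _ i (by simp; omega)]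
      simp only [Fin.val_mk]
      rw [ih (k+1) (by omega) (by omega) i]
      exact of_inr_congr Gn Mn _ _ _ (by simp; omega)

lemma alpha_pow_b0k (k : Fin (Mn+1)) (i : Fin (Gn+1)) :
    (alpha Gn Mn ^ (k:ℕ)) (.of (Sum.inr (0, i))) = .of (Sum.inr (k, i)) := by
  have h0 : (0 : Fin (Mn+1)) = ⟨0, Nat.succ_pos _⟩ := rfl
  rw [h0, alpha_pow_bk Gn Mn (k:ℕ) 0 (Nat.succ_pos _) (by have := k.isLt; omega) i]
  exact of_inr_congr Gn Mn _ _ _ (by simp)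

lemma alpha_pow_m (y : FreeGroup (XX Gn Mn)) :
    (alpha Gn Mn ^ (Mn+1)) y = b0 Gn Mn * y * (b0 Gn Mn)⁻¹ := by
  have hh : ((alpha Gn Mn ^ (Mn+1)) : MulAut (FreeGroup (XX Gn Mn))).toMonoidHom
      = (MulAut.conj (b0 Gn Mn)).toMonoidHom := by
    apply FreeGroup.ext_hom
    rintro (u | ⟨k, i⟩)
    · rw [of_inl]
      simp only [MulEquiv.coe_toMonoidHom, MulAut.conj_apply, alpha_pow_b0]
      group
    · simp only [MulEquiv.coe_toMonoidHom, MulAut.conj_apply]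
      have hsplit : (alpha Gn Mn ^ (Mn+1))
          = alpha Gn Mn ^ ((k:ℕ)) * (alpha Gn Mn ^ 1 * alpha Gn Mn ^ (Mn - (k:ℕ))) := by
        rw [← pow_add, ← pow_add]
        congr 1
        have := k.isLt; omega
      rw [hsplit, MulAut.mul_apply, MulAut.mul_apply]
      have e1 : (alpha Gn Mn ^ (Mn - (k:ℕ))) (.of (Sum.inr (k, i)))
          = .of (Sum.inr (⟨Mn, Nat.lt_succ_self _⟩, i)) := by
        have h2 := alpha_pow_bk Gn Mn (Mn - (k:ℕ)) (k:ℕ) k.isLt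
          (by have := k.isLt; omega) i
        simp only [Fin.eta] at h2
        rw [h2]
        exact of_inr_congr Gn Mn _ _ _ (by have := k.isLt; simp; omega)
      rw [e1, pow_one, alpha_apply, alf_bk_top, map_mul, map_mul, map_inv,
        alpha_pow_b0, alpha_pow_b0k]
  exact DFunLike.congr_fun hh y

lemma alpha_zpow_conj (c : ℤ) (y : FreeGroup (XX Gn Mn)) :
    (alpha Gn Mn ^ (((Mn:ℤ)+1) * c)) y = b0 Gn Mn ^ c * y * b0 Gn Mn ^ (-c) := by
  have h1 : (alpha Gn Mn ^ ((Mn:ℤ)+1)) = MulAut.conj (b0 Gn Mn) := by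
    have hc : ((Mn:ℤ)+1) = ((Mn+1 : ℕ) : ℤ) := by push_cast; ring
    apply MulEquiv.ext
    intro y
    rw [hc, zpow_natCast, alpha_pow_m]
    simp [MulAut.conj_apply]
  have h2 : (MulAut.conj (b0 Gn Mn)) ^ c = MulAut.conj (b0 Gn Mn ^ c) :=
    (map_zpow (MulAut.conj : _ →* MulAut (FreeGroup (XX Gn Mn))) (b0 Gn Mn) c).symm
  rw [zpow_mul, h1, h2, MulAut.conj_apply, zpow_neg]

def Hm : Subgroup (FreeGroup (Fin (Gn+2))) where
  carrier := {u | ((Mn:ℤ)+1) ∣ toAdd (gam Gn u)}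
  one_mem' := by simp
  mul_mem' := by
    intro a b ha hb
    simp only [Set.mem_setOf_eq, map_mul, toAdd_mul] at *
    exact dvd_add ha hb
  inv_mem' := by
    intro a ha
    simp only [Set.mem_setOf_eq, map_inv, toAdd_inv] at *
    exact ha.neg_right

lemma mem_Hm (u : FreeGroup (Fin (Gn+2))) :
    u ∈ Hm Gn Mn ↔ ((Mn:ℤ)+1) ∣ toAdd (gam Gn u) := Iff.rfl

lemma Phi_mem (x : FreeGroup (XX Gn Mn)) : Phi Gn Mn x ∈ Hm Gn Mn := by
  induction x using FreeGroup.induction_on with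
  | C1 => simp [one_mem]
  | of y =>
      rcases y with u | ⟨k, i⟩
      · show ((Mn:ℤ)+1) ∣ toAdd (gam Gn (Phi Gn Mn (.of (Sum.inl u))))
        rw [of_inl, Phi_b0, map_pow]
        simp
      · show ((Mn:ℤ)+1) ∣ toAdd (gam Gn (Phi Gn Mn (.of (Sum.inr (k, i)))))
        rw [Phi_bk]
        simp
  | inv_of y hy => rw [map_inv]; exact inv_mem hy
  | mul y z hy hz => rw [map_mul]; exact mul_mem hy hz

def PhiH : FreeGroup (XX Gn Mn) →* (Hm Gn Mn) :=
  (Phi Gn Mn).codRestrict _ (Phi_mem Gn Mn)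

noncomputable def chi (u : Hm Gn Mn) : FreeGroup (XX Gn Mn) :=
  (Theta Gn Mn (u : FreeGroup (Fin (Gn+2)))).left
    * b0 Gn Mn ^ (toAdd ((Theta Gn Mn (u : FreeGroup (Fin (Gn+2)))).right) / ((Mn:ℤ)+1))

lemma dvd_right (u : Hm Gn Mn) :
    ((Mn:ℤ)+1) ∣ toAdd ((Theta Gn Mn (u : FreeGroup (Fin (Gn+2)))).right) := by
  rw [right_Theta]
  exact u.2

lemma chi_mul (u v : Hm Gn Mn) : chi Gn Mn (u * v) = chi Gn Mn u * chi Gn Mn v := by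
  obtain ⟨cu, hcu⟩ := dvd_right Gn Mn u
  obtain ⟨cv, hcv⟩ := dvd_right Gn Mn v
  have hmul : (Theta Gn Mn ((u*v : Hm Gn Mn) : FreeGroup (Fin (Gn+2))))
      = Theta Gn Mn (u : FreeGroup (Fin (Gn+2)))
        * Theta Gn Mn (v : FreeGroup (Fin (Gn+2))) := by
    rw [← map_mul]; rfl
  unfold chi
  rw [hmul]
  rw [SemidirectProduct.mul_left, SemidirectProduct.mul_right]
  rw [zpowersHom_apply, hcu]
  rw [alpha_zpow_conj]
  rw [toAdd_mul, hcu, hcv, ← mul_add,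
    Int.mul_ediv_cancel_left _ (by omega : ((Mn:ℤ)+1) ≠ 0),
    Int.mul_ediv_cancel_left _ (by omega : ((Mn:ℤ)+1) ≠ 0),
    Int.mul_ediv_cancel_left _ (by omega : ((Mn:ℤ)+1) ≠ 0)]
  rw [zpow_add]
  group

noncomputable def chih : (Hm Gn Mn) →* FreeGroup (XX Gn Mn) where
  toFun := chi Gn Mn
  map_one' := by
    unfold chi
    rw [show ((1 : Hm Gn Mn) : FreeGroup (Fin (Gn+2))) = 1 from rfl, map_one]
    simp
  map_mul' := chi_mul Gn Mn

lemma chih_PhiH : (chih Gn Mn).comp (PhiH Gn Mn) = MonoidHom.id _ := by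
  apply FreeGroup.ext_hom
  rintro (u | ⟨k, i⟩)
  · simp only [MonoidHom.comp_apply, MonoidHom.id_apply, of_inl]
    have hcoe : ((PhiH Gn Mn (b0 Gn Mn)) : FreeGroup (Fin (Gn+2)))
        = (a0 Gn) ^ (Mn+1) := by
      rw [show ((PhiH Gn Mn (b0 Gn Mn)) : FreeGroup (Fin (Gn+2)))
        = Phi Gn Mn (b0 Gn Mn) from rfl, Phi_b0]
    show chi Gn Mn _ = b0 Gn Mn
    unfold chi
    rw [hcoe, map_pow, Theta_a0, ← map_pow]
    simp only [left_inr, right_inr]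
    rw [show ((ofAdd 1 : Multiplicative ℤ) ^ (Mn+1)) = ofAdd ((Mn:ℤ)+1) by
      rw [← ofAdd_nsmul]; congr 1; push_cast [nsmul_eq_mul]; ring]
    rw [toAdd_ofAdd, Int.ediv_self (by omega)]
    simp
  · simp only [MonoidHom.comp_apply, MonoidHom.id_apply]
    have hcoe : ((PhiH Gn Mn (.of (Sum.inr (k, i)))) : FreeGroup (Fin (Gn+2)))
        = (a0 Gn)^(k:ℕ) * .of i.succ * ((a0 Gn)^(k:ℕ))⁻¹ := by
      rw [show ((PhiH Gn Mn (.of (Sum.inr (k, i)))) : FreeGroup (Fin (Gn+2)))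
        = Phi Gn Mn (.of (Sum.inr (k, i))) from rfl, Phi_bk]
    show chi Gn Mn _ = _
    unfold chi
    rw [hcoe, map_mul, map_mul, map_inv, map_pow, Theta_a0, Theta_succ, ← map_pow]
    rw [show ((inr ((ofAdd 1 : Multiplicative ℤ) ^ (k:ℕ)) : TT Gn Mn))⁻¹
      = inr (((ofAdd 1 : Multiplicative ℤ) ^ (k:ℕ))⁻¹) by rw [map_inv]]
    rw [show (inr ((ofAdd 1 : Multiplicative ℤ)^(k:ℕ)) : TT Gn Mn)
        * inl (FreeGroup.of (Sum.inr (0, i)))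
        * inr (((ofAdd 1 : Multiplicative ℤ)^(k:ℕ))⁻¹)
      = inl ((zpowersHom _ (alpha Gn Mn) ((ofAdd 1 : Multiplicative ℤ)^(k:ℕ)))
          (FreeGroup.of (Sum.inr (0, i)))) from (inl_aut _ _).symm]
    simp only [left_inl, right_inl]
    rw [zpowersHom_apply]
    rw [show toAdd ((ofAdd 1 : Multiplicative ℤ) ^ (k:ℕ)) = ((k:ℕ):ℤ) by
      rw [← ofAdd_nsmul]; simp]
    rw [zpow_natCast, alpha_pow_b0k]
    simp

lemma PhiH_chih (u : Hm Gn Mn) : PhiH Gn Mn (chih Gn Mn u) = u := by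
  obtain ⟨c, hc⟩ := dvd_right Gn Mn u
  apply Subtype.ext
  show Phi Gn Mn (chi Gn Mn u) = (u : FreeGroup (Fin (Gn+2)))
  unfold chi
  rw [map_mul, map_zpow, Phi_b0, hc, Int.mul_ediv_cancel_left _ (by omega : ((Mn:ℤ)+1) ≠ 0)]
  rw [← zpow_natCast (a0 Gn) (Mn+1), ← zpow_mul]
  rw [show ((Mn+1 : ℕ) : ℤ) * c = ((Mn:ℤ)+1) * c by push_cast; ring, ← hc]
  exact factB Gn Mn _

noncomputable def EHm : FreeGroup (XX Gn Mn) ≃* (Hm Gn Mn) where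
  toFun := PhiH Gn Mn
  invFun := chih Gn Mn
  left_inv := fun x => DFunLike.congr_fun (chih_PhiH Gn Mn) x
  right_inv := PhiH_chih Gn Mn
  map_mul' := map_mul _

def phm (m : ℕ) : (FreeGroup (Fin (Gn+2)) × Multiplicative ℤ)
    →* (FreeGroup (Fin (Gn+2)) × Multiplicative ℤ) :=
  (MonoidHom.fst _ _).prod (((gam Gn).comp (MonoidHom.fst _ _))
    * ((powMonoidHom (m+1)).comp (MonoidHom.snd _ _)))

lemma phm_apply (m : ℕ) (u : FreeGroup (Fin (Gn+2))) (v : Multiplicative ℤ) :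
    phm Gn m (u, v) = (u, gam Gn u * v ^ (m+1)) := rfl

lemma mem_fixed (m : ℕ) (x : FreeGroup (Fin (Gn+2)) × Multiplicative ℤ) :
    x ∈ fixedSubgroup (phm Gn m) ↔ gam Gn x.1 * x.2 ^ (m+1) = x.2 := by
  constructor
  · intro h
    have : phm Gn m x = x := h
    exact congrArg Prod.snd this
  · intro h
    show phm Gn m x = x
    exact Prod.ext rfl h

lemma toAdd_pow' (v : Multiplicative ℤ) (n : ℕ) :
    toAdd (v ^ n) = (n : ℤ) * toAdd v := by
  rw [toAdd_pow, nsmul_eq_mul]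

noncomputable def fixEquiv : (fixedSubgroup (phm Gn (Mn+1))) ≃* (Hm Gn Mn) where
  toFun x := ⟨x.1.1, by
    have h := (mem_fixed Gn (Mn+1) x.1).mp x.2
    have h2 := congrArg toAdd h
    rw [toAdd_mul, toAdd_pow'] at h2
    exact ⟨-(toAdd x.1.2), by push_cast at h2 ⊢; linear_combination h2⟩⟩
  invFun u := ⟨((u : FreeGroup (Fin (Gn+2))),
      ofAdd (-(toAdd (gam Gn (u : FreeGroup (Fin (Gn+2)))) / ((Mn:ℤ)+1)))), by
    obtain ⟨c, hc⟩ := u.2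
    rw [mem_fixed]
    apply Multiplicative.toAdd.injective
    rw [toAdd_mul, toAdd_pow']
    simp only [toAdd_ofAdd]
    rw [hc, Int.mul_ediv_cancel_left _ (by omega : ((Mn:ℤ)+1) ≠ 0)]
    push_cast
    ring⟩
  left_inv x := by
    obtain ⟨⟨u, v⟩, hx⟩ := x
    apply Subtype.ext
    have h := (mem_fixed Gn (Mn+1) (u, v)).mp hx
    have h2 := congrArg toAdd h
    rw [toAdd_mul, toAdd_pow'] at h2
    have hval : toAdd (gam Gn u) = ((Mn:ℤ)+1) * (-(toAdd v)) := by
      push_cast at h2 ⊢; linear_combination h2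
    show (u, ofAdd (-(toAdd (gam Gn u) / ((Mn:ℤ)+1)))) = (u, v)
    rw [hval, Int.mul_ediv_cancel_left _ (by omega : ((Mn:ℤ)+1) ≠ 0), neg_neg]
    simp
  right_inv u := rfl
  map_mul' x y := rfl

def eX : XX Gn Mn ≃ Fin ((Mn+1)*(Gn+1)+1) :=
  ((Equiv.sumCongr (Equiv.ofUnique Unit (Fin 1)) finProdFinEquiv).trans
    finSumFinEquiv).trans (finCongr (Nat.add_comm 1 _))

noncomputable def fullEquiv :
    (fixedSubgroup (phm Gn (Mn+1))) ≃* FreeGroup (Fin ((Mn+1)*(Gn+1)+1)) :=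
  ((fixEquiv Gn Mn).trans (EHm Gn Mn).symm).trans (FreeGroup.freeGroupCongr (eX Gn Mn))

lemma rank_eq {a b : ℕ} (e : FreeGroup (Fin a) ≃* FreeGroup (Fin b)) : a = b := by
  have key : ∀ c : ℕ, Nat.card (FreeGroup (Fin c) →* Multiplicative (ZMod 2)) = 2 ^ c := by
    intro c
    rw [← Nat.card_congr (FreeGroup.lift :
      (Fin c → Multiplicative (ZMod 2)) ≃ (FreeGroup (Fin c) →* Multiplicative (ZMod 2)))]
    simp [Nat.card_eq_fintype_card]
  have he : (FreeGroup (Fin a) →* Multiplicative (ZMod 2))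
      ≃ (FreeGroup (Fin b) →* Multiplicative (ZMod 2)) :=
    { toFun := fun f => f.comp e.symm.toMonoidHom
      invFun := fun f => f.comp e.toMonoidHom
      left_inv := fun f => by ext x; simp
      right_inv := fun f => by ext x; simp }
  have hcard : (2:ℕ) ^ a = 2 ^ b := by
    rw [← key a, ← key b]
    exact Nat.card_congr he
  exact Nat.pow_right_injective (le_refl 2) hcard

end S15

theorem stmt15 (g : ℕ) (hg : 2 ≤ g) :
    (∃ f : ℕ → ((FreeGroup (Fin g) × Multiplicative ℤ) →*
                (FreeGroup (Fin g) × Multiplicative ℤ)),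
      ∀ m n : ℕ, m ≠ n →
        IsEmpty ((fixedSubgroup (f m)) ≃* (fixedSubgroup (f n)))) ∧
    ∀ m : ℕ, 1 ≤ m →
      ∃ (γ : FreeGroup (Fin g) →* Multiplicative ℤ)
        (φ : (FreeGroup (Fin g) × Multiplicative ℤ) →*
             (FreeGroup (Fin g) × Multiplicative ℤ)),
        γ (FreeGroup.of ⟨0, by omega⟩) = Multiplicative.ofAdd 1 ∧
        (∀ i : Fin g, 1 ≤ (i : ℕ) → γ (FreeGroup.of i) = 1) ∧
        (∀ (u : FreeGroup (Fin g)) (v : Multiplicative ℤ),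
          φ (u, v) = (u, γ u * v ^ (m + 1))) ∧
        Nonempty ((fixedSubgroup φ) ≃* FreeGroup (Fin (m * (g - 1) + 1))) := by
  obtain ⟨Gn, rfl⟩ : ∃ k, g = k + 2 := ⟨g - 2, by omega⟩
  constructor
  · refine ⟨fun n => S15.phm Gn (n+1), ?_⟩
    intro m n hmn
    constructor
    intro e
    have e2 := ((S15.fullEquiv Gn m).symm.trans e).trans (S15.fullEquiv Gn n)
    have h1 := S15.rank_eq e2
    have h2 : (m+1)*(Gn+1) = (n+1)*(Gn+1) := Nat.add_right_cancel h1
    have h3 : m + 1 = n + 1 := Nat.eq_of_mul_eq_mul_right (by omega) h2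
    exact hmn (by omega)
  · intro m hm
    obtain ⟨Mn, rfl⟩ : ∃ k, m = k + 1 := ⟨m - 1, by omega⟩
    refine ⟨S15.gam Gn, S15.phm Gn (Mn+1), ?_, ?_, ?_, ?_⟩
    · have h0 : (⟨0, by omega⟩ : Fin (Gn+2)) = 0 := by ext; simp
      rw [h0]
      exact S15.gam_a0 Gn
    · intro i hi
      induction i using Fin.cases with
      | zero => simp at hi
      | succ j => exact S15.gam_succ Gn j
    · intro u v
      rfl
    · exact ⟨S15.fullEquiv Gn Mn⟩
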